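/- For every n ≥ 1, the pair (x, w) = (6B_{n−1}+3C_{n−1}, 12B_{n−1}+3C_{n−1}) satisfies 2x² − w² = 9, and every positive integer solution of 2x² − w² = 9 is of this form. -/

import Mathlib

def B : ℕ → ℤ
  | 0 => 0
  | 1 => 1
  | (n+2) => 6 * B (n+1) - B n

def C : ℕ → ℤ
  | 0 => 1
  | 1 => 3
  | (n+2) => 6 * C (n+1) - C n

lemma BC_step : ∀ n : ℕ, B (n+1) = 3 * B n + C n ∧ C (n+1) = 8 * B n + 3 * C n := by
  intro n
  induction n using Nat.twoStepInduction with
  | zero => simp [B, C]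
  | one => simp [B, C]
  | more n ih1 ih2 =>
    have hB : B (n+2+1) = 6 * B (n+2) - B (n+1) := rfl
    have hC : C (n+2+1) = 6 * C (n+2) - C (n+1) := rfl
    have hB2 : B (n+2) = 6 * B (n+1) - B n := rfl
    have hC2 : C (n+2) = 6 * C (n+1) - C n := rfl
    obtain ⟨h1, h2⟩ := ih1
    obtain ⟨h3, h4⟩ := ih2
    constructor <;> [rw [hB, hB2, hC2]; rw [hC, hB2, hC2]] <;> linarith

lemma pellBC : ∀ n : ℕ, C n ^ 2 - 8 * B n ^ 2 = 1 := by
  intro n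
  induction n with
  | zero => simp [B, C]
  | succ n ih =>
    obtain ⟨h1, h2⟩ := BC_step n
    rw [h1, h2]; nlinarith [ih]

lemma key : ∀ N : ℕ, ∀ u v : ℤ, u.natAbs ≤ N → 0 < u → 0 < v → 2 * u ^ 2 - v ^ 2 = 1 →
    ∃ m : ℕ, u = 2 * B m + C m ∧ v = 4 * B m + C m := by
  intro N
  induction N with
  | zero => intro u v h hu _ _; omega
  | succ N ih =>
    intro u v hN hu hv heq
    rcases eq_or_lt_of_le (show (1:ℤ) ≤ u by omega) with h1 | h1
    · -- u = 1
      have hu1 : u = 1 := h1.symm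
      have hv1 : v = 1 := by nlinarith [sq_nonneg (v - 1), sq_nonneg (v + 1)]
      exact ⟨0, by simp [B, C, hu1, hv1]⟩
    · have hu2 : 2 ≤ u := h1
      have hu3 : 3 ≤ u := by
        rcases eq_or_lt_of_le hu2 with h2 | h2
        · exfalso
          have hv7 : v ^ 2 = 7 := by nlinarith
          have : v ≤ 2 ∨ 3 ≤ v := by omega
          rcases this with h | h <;> nlinarith
        · exact h2
      set u' := 3 * u - 2 * v with hu'
      set v' := 3 * v - 4 * u with hv'
      have heq' : 2 * u' ^ 2 - v' ^ 2 = 1 := by rw [hu', hv']; ring_nf; nlinarith [heq]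
      have hup : 0 < u' := by nlinarith
      have hvp : 0 < v' := by nlinarith
      have hlt : u' < u := by nlinarith
      have hN' : u'.natAbs ≤ N := by omega
      obtain ⟨m, hm1, hm2⟩ := ih u' v' hN' hup hvp heq'
      refine ⟨m + 1, ?_, ?_⟩
      · obtain ⟨h1, h2⟩ := BC_step m
        rw [h1, h2]
        have : u = 3 * u' + 2 * v' := by rw [hu', hv']; ring
        rw [this, hm1, hm2]; ring
      · obtain ⟨h1, h2⟩ := BC_step m
        rw [h1, h2]
        have : v = 4 * u' + 3 * v' := by rw [hu', hv']; ring
        rw [this, hm1, hm2]; ring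

def b : ℕ → ℤ
  | 0 => 0
  | 1 => 0
  | (n+2) => 6 * b (n+1) - b n + 2

def c : ℕ → ℤ
  | 0 => -1
  | 1 => 1
  | (n+2) => 6 * c (n+1) - c n

def P : ℕ → ℤ
  | 0 => 0
  | 1 => 1
  | (n+2) => 2 * P (n+1) + P n

theorem pell_nine_solutions :
    (∀ n : ℕ, 1 ≤ n →
      2 * (6 * B (n - 1) + 3 * C (n - 1)) ^ 2 - (12 * B (n - 1) + 3 * C (n - 1)) ^ 2 = 9) ∧
    (∀ x w : ℤ, 0 < x → 0 < w → 2 * x ^ 2 - w ^ 2 = 9 →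
      ∃ n : ℕ, 1 ≤ n ∧ x = 6 * B (n - 1) + 3 * C (n - 1) ∧
        w = 12 * B (n - 1) + 3 * C (n - 1)) := by
  constructor
  · intro n hn
    linear_combination 9 * pellBC (n - 1)
  intro x w hx hw heq
  have hmod : ∀ a b : ZMod 3, 2 * a ^ 2 - b ^ 2 = 0 → a = 0 ∧ b = 0 := by decide
  have h0 : 2 * (x : ZMod 3) ^ 2 - (w : ZMod 3) ^ 2 = 0 := by
    have : ((2 * x ^ 2 - w ^ 2 : ℤ) : ZMod 3) = ((9 : ℤ) : ZMod 3) := by rw [heq]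
    push_cast at this
    rw [this]; decide
  obtain ⟨hx3, hw3⟩ := hmod _ _ h0
  rw [ZMod.intCast_zmod_eq_zero_iff_dvd] at hx3 hw3
  obtain ⟨u, rfl⟩ := hx3
  obtain ⟨v, rfl⟩ := hw3
  push_cast at hx hw heq
  have hu : 0 < u := by linarith
  have hv : 0 < v := by linarith
  have huv : 2 * u ^ 2 - v ^ 2 = 1 := by nlinarith
  obtain ⟨m, hm1, hm2⟩ := key u.natAbs u v le_rfl hu hv huv
  exact ⟨m + 1, by omega, by simp; linarith, by simp; linarith⟩
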